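/- Let α, β be real numbers with 2 < α < 3, α ≠ 2, and 3 < β < 4, and set p₋ = (β+1−√((β+1)(β−3)))/(2β) and p₊ = (β+1+√((β+1)(β−3)))/(2β). Assume (C3a) p₋ = (α−1)/α, (C3b) f_β(1/α) = p₊, and (C3c) f_α(p₊) = 1/α. Then the bridging point B = 1/α is a periodic point of neither f_α nor f_β: for every integer n ≥ 1, the n-th iterate of f_α at 1/α differs from 1/α, and the n-th iterate of f_β at 1/α differs from 1/α. -/

import Mathlib

/-- The logistic map `f_γ(x) = γ·x·(1−x)`. -/
def logistic (γ x : ℝ) : ℝ := γ * x * (1 - x)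

/-- Under conditions (C3a)–(C3c) with `2 < α < 3`, `α ≠ 2`, `3 < β < 4`, the bridging
point `B = 1/α` is a periodic point of neither `f_α` nor `f_β`: for every `n ≥ 1`,
`f_α^[n](1/α) ≠ 1/α` and `f_β^[n](1/α) ≠ 1/α`. -/
theorem logistic_IFS_three_point_bridging_point_not_periodic (α β : ℝ)
    (hα1 : 2 < α) (hα2 : α < 3) (hα3 : α ≠ 2) (hβ1 : 3 < β) (hβ2 : β < 4)
    (pm pp : ℝ)
    (hpm : pm = (β + 1 - Real.sqrt ((β + 1) * (β - 3))) / (2 * β))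
    (hpp : pp = (β + 1 + Real.sqrt ((β + 1) * (β - 3))) / (2 * β))
    (hC3a : pm = (α - 1) / α)
    (hC3b : logistic β (1 / α) = pp)
    (hC3c : logistic α pp = 1 / α) :
    ∀ n : ℕ, 1 ≤ n →
      (logistic α)^[n] (1 / α) ≠ 1 / α ∧ (logistic β)^[n] (1 / α) ≠ 1 / α := by
  have hα0 : α ≠ 0 := by positivity
  have hβ0 : β ≠ 0 := by positivity
  set s := Real.sqrt ((β + 1) * (β - 3)) with hs
  have hs2 : s * s = (β + 1) * (β - 3) :=
    Real.mul_self_sqrt (by nlinarith)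
  -- α ≠ 2 means fixed point (α-1)/α ≠ 1/α
  have hne : (α - 1) / α ≠ 1 / α := by
    intro h
    apply hα3
    field_simp at h
    linarith
  -- f_α(1/α) = (α-1)/α
  have hA0 : logistic α (1 / α) = (α - 1) / α := by
    unfold logistic; field_simp
  -- (α-1)/α is a fixed point of f_α
  have hAfix : logistic α ((α - 1) / α) = (α - 1) / α := by
    unfold logistic; field_simp; ring
  have hAiter : ∀ n : ℕ, 1 ≤ n → (logistic α)^[n] (1 / α) = (α - 1) / α := by
    intro n hn
    induction n with
    | zero => omega
    | succ m ih =>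
      rcases Nat.eq_or_lt_of_le hn with h | h
      · obtain rfl : m = 0 := by omega
        simpa [one_div] using hA0
      · rw [Function.iterate_succ_apply', ih (by omega), hAfix]
  -- the 2-cycle of f_β
  have hBpp : logistic β pp = pm := by
    rw [hpp, hpm]; unfold logistic
    field_simp
    nlinarith [hs2]
  have hBpm : logistic β pm = pp := by
    rw [hpp, hpm]; unfold logistic
    field_simp
    nlinarith [hs2]
  -- pm ≠ 1/α, pp ≠ 1/α
  have hpmne : pm ≠ 1 / α := by rw [hC3a]; exact hne
  have hppne : pp ≠ 1 / α := by
    intro h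
    rw [h] at hC3c
    rw [hA0] at hC3c
    exact hne hC3c
  have hBiter : ∀ k : ℕ, (logistic β)^[2 * k + 1] (1 / α) = pp ∧
      (logistic β)^[2 * k + 2] (1 / α) = pm := by
    intro k
    induction k with
    | zero =>
      constructor
      · simpa using hC3b
      · show (logistic β)^[2] (1 / α) = pm
        rw [Function.iterate_succ_apply', Function.iterate_one, hC3b, hBpp]
    | succ m ih =>
      obtain ⟨h1, h2⟩ := ih
      have e1 : 2 * (m + 1) + 1 = (2 * m + 2) + 1 := by ring
      have e2 : 2 * (m + 1) + 2 = (2 * m + 2) + 1 + 1 := by ring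
      constructor
      · rw [e1, Function.iterate_succ_apply', h2, hBpm]
      · rw [e2, Function.iterate_succ_apply', Function.iterate_succ_apply', h2, hBpm, hBpp]
  intro n hn
  refine ⟨by rw [hAiter n hn]; exact hne, ?_⟩
  rcases Nat.even_or_odd n with ⟨k, hk⟩ | ⟨k, hk⟩
  · have hk1 : 1 ≤ k := by omega
    have : n = 2 * (k - 1) + 2 := by omega
    rw [this, (hBiter (k - 1)).2]
    exact hpmne
  · rw [hk, (hBiter k).1]
    exact hppne
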